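/- Suppose for every t ≥ 1 the Loewner inequality (F_t − I) R_t⁻¹ (F_t − I) ≼ (L_t P_{t−1} L_tᵀ + R_t)⁻¹ holds, and suppose there exists q > 0 such that G_tᵀ P_{t−1}⁻¹ G_t ≼ P_{t−1}⁻¹ − q·I for every t ≥ 1. Then the estimation errors converge to zero: θ̃_t → 0 as t → ∞; in fact the series ∑_{t≥0} ‖θ̃_t‖² is bounded by V_0/q, where V_0 := θ̃_0ᵀ P_0⁻¹ θ̃_0. -/

import Mathlib

open Matrix

private lemma ekf_dotTrans {m n : ℕ} (A : Matrix (Fin m) (Fin n) ℝ) (u : Fin n → ℝ)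
    (v : Fin m → ℝ) : (A *ᵥ u) ⬝ᵥ v = u ⬝ᵥ (Aᵀ *ᵥ v) := by
  rw [dotProduct_comm, dotProduct_mulVec, mulVec_transpose, dotProduct_comm]

private lemma ekf_inv_transpose {k : ℕ} {M : Matrix (Fin k) (Fin k) ℝ} (h : M.PosDef) :
    M⁻¹ᵀ = M⁻¹ := by
  have h2 := h.inv.1.eq
  rwa [Matrix.conjTranspose_eq_transpose_of_trivial] at h2

private lemma ekf_psd_quad {k : ℕ} {M : Matrix (Fin k) (Fin k) ℝ} (h : M.PosSemidef)
    (v : Fin k → ℝ) : 0 ≤ v ⬝ᵥ (M *ᵥ v) := by simpa using h.dotProduct_mulVec_nonneg v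

private lemma ekf_step (p r : ℕ)
    (Pp Pn : Matrix (Fin p) (Fin p) ℝ) (L' : Matrix (Fin r) (Fin p) ℝ)
    (R' F' : Matrix (Fin r) (Fin r) ℝ) (G' : Matrix (Fin p) (Fin p) ℝ)
    (hR : R'.PosDef) (hRs : R'.IsSymm) (hFs : F'.IsSymm)
    (hPp : Pp.PosDef) (hPn : Pn.PosDef)
    (hrec : Pn = (1 - (Pp * L'ᵀ * (L' * Pp * L'ᵀ + R')⁻¹) * L') * Pp)
    (hinv : Pn⁻¹ = Pp⁻¹ + L'ᵀ * R'⁻¹ * L')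
    (θ0 θ1 : Fin p → ℝ) (w : Fin r → ℝ)
    (hθ1 : θ1 = G' *ᵥ θ0 - (Pn * L'ᵀ * R'⁻¹) *ᵥ w)
    (hFe : F' *ᵥ w = L' *ᵥ (G' *ᵥ θ0))
    (hL1 : ((L' * Pp * L'ᵀ + R')⁻¹ - (F' - 1) * R'⁻¹ * (F' - 1)).PosSemidef)
    (q : ℝ)
    (hL2 : ((Pp⁻¹ - q • (1 : Matrix (Fin p) (Fin p) ℝ)) - G'ᵀ * Pp⁻¹ * G').PosSemidef) :
    θ1 ⬝ᵥ (Pn⁻¹ *ᵥ θ1) + q * (θ0 ⬝ᵥ θ0) ≤ θ0 ⬝ᵥ (Pp⁻¹ *ᵥ θ0) := by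
  set S := L' * Pp * L'ᵀ + R' with hSdef
  set x := G' *ᵥ θ0 with hx0
  set u := (Pn * L'ᵀ * R'⁻¹) *ᵥ w with hu0
  set a := F' *ᵥ w with ha0
  -- basic facts
  have hLPL : (L' * Pp * L'ᵀ).PosSemidef := by
    have := hPp.posSemidef.mul_mul_conjTranspose_same L'
    rwa [Matrix.conjTranspose_eq_transpose_of_trivial] at this
  have hSpos : S.PosDef := by
    rw [hSdef, add_comm]
    exact hR.add_posSemidef hLPL
  have hS1 : S⁻¹ * S = 1 := Matrix.nonsing_inv_mul S (isUnit_iff_ne_zero.mpr hSpos.det_pos.ne')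
  have hS2 : S * S⁻¹ = 1 := Matrix.mul_nonsing_inv S (isUnit_iff_ne_zero.mpr hSpos.det_pos.ne')
  have hR1 : R' * R'⁻¹ = 1 := Matrix.mul_nonsing_inv R' (isUnit_iff_ne_zero.mpr hR.det_pos.ne')
  have hPn1 : Pn⁻¹ * Pn = 1 := Matrix.nonsing_inv_mul Pn (isUnit_iff_ne_zero.mpr hPn.det_pos.ne')
  have hRiT : R'⁻¹ᵀ = R'⁻¹ := ekf_inv_transpose hR
  have hSiT : S⁻¹ᵀ = S⁻¹ := ekf_inv_transpose hSpos
  have hPniT : Pn⁻¹ᵀ = Pn⁻¹ := ekf_inv_transpose hPn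
  have hRt : R'ᵀ = R' := hRs.eq
  have hFt : F'ᵀ = F' := hFs.eq
  have hLx : L' *ᵥ x = a := hFe.symm
  -- key matrix identity
  have hA : L' * Pp * L'ᵀ = S - R' := by rw [hSdef, add_sub_cancel_right]
  have h1 : L' * Pn * L'ᵀ =
      (L' * Pp * L'ᵀ) - (L' * Pp * L'ᵀ) * S⁻¹ * (L' * Pp * L'ᵀ) := by
    rw [hrec]
    simp only [Matrix.sub_mul, Matrix.mul_sub, Matrix.one_mul, Matrix.mul_assoc]
  have h2 : (S - R') - (S - R') * S⁻¹ * (S - R') = R' - R' * S⁻¹ * R' := by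
    rw [Matrix.sub_mul, hS2, Matrix.sub_mul, Matrix.one_mul, Matrix.mul_sub,
      Matrix.mul_assoc R' S⁻¹ S, hS1, Matrix.mul_one]
    abel
  have hKey : L' * Pn * L'ᵀ = R' - R' * S⁻¹ * R' := by rw [h1, hA]; exact h2
  -- mulVec facts
  have hu : Pn⁻¹ *ᵥ u = (L'ᵀ * R'⁻¹) *ᵥ w := by
    rw [hu0, Matrix.mulVec_mulVec, ← Matrix.mul_assoc, ← Matrix.mul_assoc, hPn1, Matrix.one_mul]
  have hLu : L' *ᵥ u = w - (R' * S⁻¹) *ᵥ w := by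
    rw [hu0, Matrix.mulVec_mulVec]
    have : L' * (Pn * L'ᵀ * R'⁻¹) = 1 - R' * S⁻¹ := by
      calc L' * (Pn * L'ᵀ * R'⁻¹) = (L' * Pn * L'ᵀ) * R'⁻¹ := by
            simp only [Matrix.mul_assoc]
        _ = (R' - R' * S⁻¹ * R') * R'⁻¹ := by rw [hKey]
        _ = 1 - R' * S⁻¹ := by
            rw [Matrix.sub_mul, hR1, Matrix.mul_assoc (R' * S⁻¹) R' R'⁻¹, hR1, Matrix.mul_one]
    rw [this, Matrix.sub_mulVec, Matrix.one_mulVec]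
  -- the four dot product computations
  have hT1 : x ⬝ᵥ (Pn⁻¹ *ᵥ x) = x ⬝ᵥ (Pp⁻¹ *ᵥ x) + a ⬝ᵥ (R'⁻¹ *ᵥ a) := by
    rw [hinv, Matrix.add_mulVec, dotProduct_add]
    congr 1
    rw [← Matrix.mulVec_mulVec, ← Matrix.mulVec_mulVec, hLx,
      dotProduct_mulVec, vecMul_transpose, hLx]
  have hT2 : x ⬝ᵥ ((L'ᵀ * R'⁻¹) *ᵥ w) = a ⬝ᵥ (R'⁻¹ *ᵥ w) := by
    rw [← Matrix.mulVec_mulVec, dotProduct_mulVec, vecMul_transpose, hLx]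
  have hT3 : u ⬝ᵥ (Pn⁻¹ *ᵥ x) = a ⬝ᵥ (R'⁻¹ *ᵥ w) := by
    rw [← hPniT, ← ekf_dotTrans, hu, ← Matrix.mulVec_mulVec, ekf_dotTrans,
      Matrix.transpose_transpose, hLx, dotProduct_comm]
  have hT4 : u ⬝ᵥ ((L'ᵀ * R'⁻¹) *ᵥ w) = w ⬝ᵥ (R'⁻¹ *ᵥ w) - w ⬝ᵥ (S⁻¹ *ᵥ w) := by
    rw [← Matrix.mulVec_mulVec, dotProduct_mulVec, vecMul_transpose, hLu,
      sub_dotProduct]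
    congr 1
    rw [ekf_dotTrans, Matrix.transpose_mul, hSiT, hRt, ← Matrix.mulVec_mulVec,
      Matrix.mulVec_mulVec w R' R'⁻¹, hR1, Matrix.one_mulVec]
  have hT5 : w ⬝ᵥ (((F' - 1) * R'⁻¹ * (F' - 1)) *ᵥ w) =
      a ⬝ᵥ (R'⁻¹ *ᵥ a) - 2 * (a ⬝ᵥ (R'⁻¹ *ᵥ w)) + w ⬝ᵥ (R'⁻¹ *ᵥ w) := by
    have hF1t : (F' - 1)ᵀ = F' - 1 := by rw [Matrix.transpose_sub, hFt, Matrix.transpose_one]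
    have hF1w : (F' - 1) *ᵥ w = a - w := by rw [Matrix.sub_mulVec, Matrix.one_mulVec]
    have hcomm : w ⬝ᵥ (R'⁻¹ *ᵥ a) = a ⬝ᵥ (R'⁻¹ *ᵥ w) := by
      rw [dotProduct_mulVec, ← mulVec_transpose, hRiT, dotProduct_comm]
    rw [← Matrix.mulVec_mulVec, ← Matrix.mulVec_mulVec, dotProduct_mulVec,
      ← hF1t, vecMul_transpose, hF1t, hF1w, Matrix.mulVec_sub, dotProduct_sub,
      sub_dotProduct, sub_dotProduct, hcomm]
    ring
  -- assemble
  have hθ1' : θ1 = x - u := hθ1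
  have hexp : θ1 ⬝ᵥ (Pn⁻¹ *ᵥ θ1) =
      x ⬝ᵥ (Pn⁻¹ *ᵥ x) - x ⬝ᵥ ((L'ᵀ * R'⁻¹) *ᵥ w) - u ⬝ᵥ (Pn⁻¹ *ᵥ x)
        + u ⬝ᵥ ((L'ᵀ * R'⁻¹) *ᵥ w) := by
    rw [hθ1', Matrix.mulVec_sub, hu]
    simp only [sub_dotProduct, dotProduct_sub]
    ring
  have hq1 : 0 ≤ w ⬝ᵥ (S⁻¹ *ᵥ w) - w ⬝ᵥ (((F' - 1) * R'⁻¹ * (F' - 1)) *ᵥ w) := by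
    have h := ekf_psd_quad hL1 w
    rwa [Matrix.sub_mulVec, dotProduct_sub] at h
  have hq2 : 0 ≤ θ0 ⬝ᵥ (Pp⁻¹ *ᵥ θ0) - q * (θ0 ⬝ᵥ θ0) - x ⬝ᵥ (Pp⁻¹ *ᵥ x) := by
    have h := ekf_psd_quad hL2 θ0
    rw [Matrix.sub_mulVec, dotProduct_sub, Matrix.sub_mulVec,
      dotProduct_sub, Matrix.smul_mulVec, Matrix.one_mulVec,
      dotProduct_smul, smul_eq_mul] at h
    have hgq : θ0 ⬝ᵥ ((G'ᵀ * Pp⁻¹ * G') *ᵥ θ0) = x ⬝ᵥ (Pp⁻¹ *ᵥ x) := by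
      rw [← Matrix.mulVec_mulVec, ← Matrix.mulVec_mulVec, dotProduct_mulVec,
        vecMul_transpose, ← hx0]
    rw [hgq] at h
    linarith
  rw [hexp, hT1, hT2, hT3, hT4]
  linarith [hq1, hT5]

/-- Convergence of the EKF parameter estimation errors: under the Loewner conditions with a
margin `q > 0`, `θ̃_t → 0` and the partial sums of `∑ ‖θ̃_t‖²` are bounded by `V_0 / q`.
(Quantities at time `t ≥ 1` are indexed with argument `t+1`, `t : ℕ`.) -/
theorem ekf_estimation_error_convergence
    (p r : ℕ) (hp : 0 < p) (hr : 0 < r)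
    (R : ℕ → Matrix (Fin r) (Fin r) ℝ) (L : ℕ → Matrix (Fin r) (Fin p) ℝ)
    (F : ℕ → Matrix (Fin r) (Fin r) ℝ) (G : ℕ → Matrix (Fin p) (Fin p) ℝ)
    (hRpos : ∀ t : ℕ, (R (t + 1)).PosDef)
    (hRsymm : ∀ t : ℕ, (R (t + 1)).IsSymm)
    (hFsymm : ∀ t : ℕ, (F (t + 1)).IsSymm)
    (P : ℕ → Matrix (Fin p) (Fin p) ℝ)
    (hP0 : (P 0).PosDef)
    (hPrec : ∀ t : ℕ,
      P (t + 1) =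
        (1 - (P t * (L (t + 1))ᵀ * (L (t + 1) * P t * (L (t + 1))ᵀ + R (t + 1))⁻¹) * L (t + 1)) *
          P t)
    (hPpos : ∀ t : ℕ, (P t).PosDef)
    (hPinv : ∀ t : ℕ,
      (P (t + 1))⁻¹ = (P t)⁻¹ + (L (t + 1))ᵀ * (R (t + 1))⁻¹ * L (t + 1))
    (θ : ℕ → Fin p → ℝ) (e : ℕ → Fin r → ℝ)
    (hθ : ∀ t : ℕ,
      θ (t + 1) = G (t + 1) *ᵥ θ t - (P (t + 1) * (L (t + 1))ᵀ * (R (t + 1))⁻¹) *ᵥ e (t + 1))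
    (hFe : ∀ t : ℕ, F (t + 1) *ᵥ e (t + 1) = L (t + 1) *ᵥ (G (t + 1) *ᵥ θ t))
    (hLoew1 : ∀ t : ℕ,
      ((L (t + 1) * P t * (L (t + 1))ᵀ + R (t + 1))⁻¹ -
        (F (t + 1) - 1) * (R (t + 1))⁻¹ * (F (t + 1) - 1)).PosSemidef)
    (q : ℝ) (hq : 0 < q)
    (hLoew2 : ∀ t : ℕ,
      (((P t)⁻¹ - q • (1 : Matrix (Fin p) (Fin p) ℝ)) -
        (G (t + 1))ᵀ * (P t)⁻¹ * G (t + 1)).PosSemidef) :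
    Filter.Tendsto θ Filter.atTop (nhds 0) ∧
      ∀ N : ℕ, ∑ t ∈ Finset.range N, θ t ⬝ᵥ θ t ≤ (θ 0 ⬝ᵥ ((P 0)⁻¹ *ᵥ θ 0)) / q := by
  set V : ℕ → ℝ := fun t => θ t ⬝ᵥ ((P t)⁻¹ *ᵥ θ t) with hV
  set d : ℕ → ℝ := fun t => θ t ⬝ᵥ θ t with hd
  have step : ∀ t : ℕ, V (t + 1) + q * d t ≤ V t := fun t =>
    ekf_step p r (P t) (P (t + 1)) (L (t + 1)) (R (t + 1)) (F (t + 1)) (G (t + 1))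
      (hRpos t) (hRsymm t) (hFsymm t) (hPpos t) (hPpos (t + 1)) (hPrec t) (hPinv t)
      (θ t) (θ (t + 1)) (e (t + 1)) (hθ t) (hFe t) (hLoew1 t) q (hLoew2 t)
  have hVnonneg : ∀ t : ℕ, 0 ≤ V t := fun t =>
    ekf_psd_quad (hPpos t).inv.posSemidef (θ t)
  have hdnonneg : ∀ t : ℕ, 0 ≤ d t := fun t =>
    Finset.sum_nonneg fun i _ => mul_self_nonneg (θ t i)
  have hsum : ∀ N : ℕ, V N + q * ∑ t ∈ Finset.range N, d t ≤ V 0 := by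
    intro N
    induction N with
    | zero => simp
    | succ N ih =>
      rw [Finset.sum_range_succ]
      have := step N
      nlinarith [this, ih]
  have hbound : ∀ N : ℕ, ∑ t ∈ Finset.range N, d t ≤ V 0 / q := by
    intro N
    rw [le_div_iff₀ hq]
    nlinarith [hsum N, hVnonneg N]
  refine ⟨?_, hbound⟩
  have hsummable : Summable d := summable_of_sum_range_le hdnonneg hbound
  have hd0 : Filter.Tendsto d Filter.atTop (nhds 0) := hsummable.tendsto_atTop_zero
  rw [tendsto_pi_nhds]
  intro i
  rw [Pi.zero_apply, tendsto_zero_iff_abs_tendsto_zero]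
  have hle : ∀ t : ℕ, |θ t i| ≤ Real.sqrt (d t) := by
    intro t
    rw [← Real.sqrt_sq_eq_abs]
    apply Real.sqrt_le_sqrt
    have : θ t i ^ 2 = θ t i * θ t i := sq (θ t i) ▸ by ring
    rw [this]
    exact Finset.single_le_sum (f := fun j => θ t j * θ t j)
      (fun j _ => mul_self_nonneg _) (Finset.mem_univ i)
  have hsq : Filter.Tendsto (fun t => Real.sqrt (d t)) Filter.atTop (nhds 0) := by
    have := (Real.continuous_sqrt.tendsto' 0 0 Real.sqrt_zero).comp hd0
    exact this
  exact squeeze_zero (fun t => abs_nonneg _) hle hsq
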